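/- For every real μ > 1, log₂(μ - 1/2) + log₂ e ≥ log₂(μ - 1) - μ·log₂(1 - 1/μ); equivalently, in natural logarithms, ln(μ - 1/2) + 1 ≥ ln(μ - 1) - μ·ln(1 - 1/μ). -/

import Mathlib

open Real Set

private noncomputable def auxF : ℝ → ℝ :=
  fun s => 2 * s * Real.log (1 + s) + 2 * s - (2 * s + 1) * Real.log (1 + 2 * s)

private lemma auxF_hasDerivAt {s : ℝ} (hs : 0 ≤ s) :
    HasDerivAt auxF
      (2 * Real.log (1 + s) - 2 * Real.log (1 + 2 * s) + 2 * s / (1 + s)) s := by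
  have h1 : (1 : ℝ) + s ≠ 0 := by linarith
  have h2 : (1 : ℝ) + 2 * s ≠ 0 := by linarith
  have hl1 : HasDerivAt (fun x : ℝ => Real.log (1 + x)) (1 / (1 + s)) s := by
    have := ((hasDerivAt_id s).const_add 1).log h1
    simpa using this
  have hl2 : HasDerivAt (fun x : ℝ => Real.log (1 + 2 * x)) (2 / (1 + 2 * s)) s := by
    have := (((hasDerivAt_id s).const_mul 2).const_add 1).log h2
    simpa using this
  have hA : HasDerivAt (fun x : ℝ => 2 * x * Real.log (1 + x))
      (2 * 1 * Real.log (1 + s) + 2 * s * (1 / (1 + s))) s :=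
    ((hasDerivAt_id s).const_mul 2).mul hl1
  have hlin : HasDerivAt (fun x : ℝ => 2 * x + 1) (2 * 1) s :=
    ((hasDerivAt_id s).const_mul 2).add_const 1
  have hB : HasDerivAt (fun x : ℝ => (2 * x + 1) * Real.log (1 + 2 * x))
      (2 * 1 * Real.log (1 + 2 * s) + (2 * s + 1) * (2 / (1 + 2 * s))) s :=
    hlin.mul hl2
  have H := (hA.add ((hasDerivAt_id s).const_mul 2)).sub hB
  refine H.congr_deriv ?_
  field_simp
  ring

private lemma auxF_nonneg {s : ℝ} (hs : 0 ≤ s) : 0 ≤ auxF s := by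
  rcases eq_or_lt_of_le hs with h | h
  · simp [auxF, ← h]
  have hmono : StrictMonoOn auxF (Ici (0 : ℝ)) := by
    apply strictMonoOn_of_deriv_pos (convex_Ici 0)
    · intro x hx
      exact ((auxF_hasDerivAt hx).continuousAt).continuousWithinAt
    · intro x hx
      simp only [interior_Ici, mem_Ioi] at hx
      rw [(auxF_hasDerivAt hx.le).deriv]
      have h1 : (0:ℝ) < 1 + x := by linarith
      have h2 : (0:ℝ) < 1 + 2 * x := by linarith
      have hq : (0:ℝ) < (1 + 2*x) / (1 + x) := by positivity
      have hne : (1 + 2*x) / (1 + x) ≠ 1 := by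
        intro hcon
        rw [div_eq_one_iff_eq (by linarith)] at hcon
        linarith
      have hlog : Real.log ((1 + 2*x) / (1 + x)) < (1 + 2*x) / (1 + x) - 1 :=
        Real.log_lt_sub_one_of_pos hq hne
      rw [Real.log_div (by linarith) (by linarith)] at hlog
      have hd : (1 + 2*x) / (1 + x) - 1 = x / (1 + x) := by
        field_simp; ring
      rw [hd] at hlog
      have h2x : 2 * x / (1 + x) = 2 * (x / (1 + x)) := by ring
      rw [h2x]
      linarith
  have := hmono (le_refl (0:ℝ)) (le_of_lt h) h
  simpa [auxF] using this.le

theorem asymptotically_optimal_bound_inequality (μ : ℝ) (hμ : 1 < μ) :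
    Real.logb 2 (μ - 1/2) + Real.logb 2 (Real.exp 1) ≥
      Real.logb 2 (μ - 1) - μ * Real.logb 2 (1 - 1/μ) ∧
    Real.log (μ - 1/2) + 1 ≥ Real.log (μ - 1) - μ * Real.log (1 - 1/μ) := by
  have hμ0 : (0:ℝ) < μ := by linarith
  have hμ1 : (0:ℝ) < μ - 1 := by linarith
  have hμh : (0:ℝ) < μ - 1/2 := by linarith
  have hln : Real.log (μ - 1/2) + 1 ≥ Real.log (μ - 1) - μ * Real.log (1 - 1/μ) := by
    set s : ℝ := 1 / (2 * (μ - 1)) with hs_def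
    have hs : 0 < s := by positivity
    have key := auxF_nonneg hs.le
    have e1 : (1:ℝ) + s = (μ - 1/2) / (μ - 1) := by
      rw [hs_def]; field_simp; ring
    have e2 : (1:ℝ) + 2 * s = μ / (μ - 1) := by
      rw [hs_def]; field_simp; ring
    have l1 : Real.log (1 + s) = Real.log (μ - 1/2) - Real.log (μ - 1) := by
      rw [e1, Real.log_div (by linarith) (by linarith)]
    have l2 : Real.log (1 + 2 * s) = Real.log μ - Real.log (μ - 1) := by
      rw [e2, Real.log_div (by linarith) (by linarith)]
    have l3 : Real.log (1 - 1/μ) = Real.log (μ - 1) - Real.log μ := by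
      have h : (1:ℝ) - 1/μ = (μ - 1) / μ := by field_simp
      rw [h, Real.log_div (by linarith) (by linarith)]
    have hsval : 2 * s * (μ - 1) = 1 := by
      rw [hs_def]; field_simp
    have h2s1 : (2 * s + 1) * (μ - 1) = μ := by
      rw [hs_def]; field_simp; ring
    unfold auxF at key
    rw [l1, l2] at key
    have key2 : (0:ℝ) ≤ (2 * s * (Real.log (μ - 1/2) - Real.log (μ - 1)) + 2 * s
        - (2 * s + 1) * (Real.log μ - Real.log (μ - 1))) * (μ - 1) :=
      mul_nonneg key hμ1.le
    have expand : (2 * s * (Real.log (μ - 1/2) - Real.log (μ - 1)) + 2 * s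
        - (2 * s + 1) * (Real.log μ - Real.log (μ - 1))) * (μ - 1)
        = (Real.log (μ - 1/2) - Real.log (μ - 1)) + 1
          - μ * (Real.log μ - Real.log (μ - 1)) := by
      linear_combination ((Real.log (μ - 1/2) - Real.log (μ - 1)) + 1) * hsval
        - (Real.log μ - Real.log (μ - 1)) * h2s1
    rw [expand] at key2
    rw [l3]
    linarith
  refine ⟨?_, hln⟩
  have hlog2 : (0:ℝ) < Real.log 2 := Real.log_pos (by norm_num)
  simp only [Real.logb, Real.log_exp]
  rw [ge_iff_le, ← add_div, ← mul_div_assoc, ← sub_div]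
  exact div_le_div_of_nonneg_right hln hlog2.le
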